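/- Let G be an n-player game with nonnegative welfare W such that all best responses are unique, let λ_c, μ_c satisfy the common-interest smoothness inequality ∑_i (W(a) − W(a*_i, a_{−i})) ≤ μ_c W(a) − λ_c W(a*) for all a, and suppose G is β-arithmetically misaligned: |U_i(a) − W(a)| ≤ β W(a*) for all i and a (using the optimal welfare as bound). Then every sink equilibrium σ satisfies E_{a∼σ}[W(a)] ≥ max((λ_c − 4βn)/μ_c, 0) · W(a*); i.e., the price of sinking is at least max((λ_c − 4βn)/μ_c, 0). -/

import Mathlib

/-- price-of-sinking bound under `β`-arithmetic misalignment. -/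
theorem pose_arithmetic_misalignment
    {n : ℕ} (hn : 0 < n) {A : Fin n → Type*}
    [∀ i, Fintype (A i)] [∀ i, DecidableEq (A i)]
    (U : Fin n → (∀ j, A j) → ℝ) (W : (∀ j, A j) → ℝ)
    (hW : ∀ a, 0 ≤ W a)
    (astar : ∀ j, A j) (hopt : ∀ a, W a ≤ W astar) (hWpos : 0 < W astar)
    (lamc muc : ℝ) (hlam : 0 ≤ lamc) (hlm : lamc ≤ muc)
    -- common-interest smoothness constants
    (hsmooth : ∀ a : (∀ j, A j),
      ∑ i, (W a - W (Function.update a i (astar i))) ≤ muc * W a - lamc * W astar)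
    (br : ∀ i : Fin n, (∀ j, A j) → A i)
    -- unique best responses
    (hbr : ∀ (i : Fin n) (a : (∀ j, A j)) (x : A i),
      U i (Function.update a i x) ≤ U i (Function.update a i (br i a)))
    (hbr_unique : ∀ (i : Fin n) (a : (∀ j, A j)) (x : A i),
      U i (Function.update a i x) = U i (Function.update a i (br i a)) → x = br i a)
    -- β-arithmetic misalignment
    (beta : ℝ) (hbeta : 0 ≤ beta)
    (hmis : ∀ (i : Fin n) (a : (∀ j, A j)), |U i a - W a| ≤ beta * W astar)
    -- σ is a sink equilibrium of the best-response Markov chain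
    (σ : (∀ j, A j) → ℝ)
    (hσ_nonneg : ∀ a, 0 ≤ σ a) (hσ_sum : ∑ a, σ a = 1)
    (hstat : ∀ a : (∀ j, A j), σ a = (1 / (n : ℝ)) *
      ∑ b : (∀ j, A j),
        ((Finset.univ.filter
          (fun i : Fin n => Function.update b i (br i b) = a)).card : ℝ) * σ b)
    (hsink : ∀ a : (∀ j, A j), 0 < σ a → ∀ i : Fin n,
      0 < σ (Function.update a i (br i a))) :
    ∑ a : (∀ j, A j), σ a * W a ≥ max ((lamc - 4 * beta * n) / muc) 0 * W astar := by
  set S := ∑ a : (∀ j, A j), σ a * W a with hS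
  have hnR : (0:ℝ) < (n:ℝ) := by exact_mod_cast hn
  have hSnn : 0 ≤ S := Finset.sum_nonneg fun a _ => mul_nonneg (hσ_nonneg a) (hW a)
  -- counting identity
  have key : ∀ b : (∀ j, A j),
      ∑ a : (∀ j, A j), ((Finset.univ.filter
        (fun i : Fin n => Function.update b i (br i b) = a)).card : ℝ) * W a
      = ∑ i, W (Function.update b i (br i b)) := by
    intro b
    have h1 : ∀ a : (∀ j, A j), ((Finset.univ.filter
        (fun i : Fin n => Function.update b i (br i b) = a)).card : ℝ) * W a
        = ∑ i : Fin n, if Function.update b i (br i b) = a then W a else 0 := by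
      intro a
      rw [Finset.sum_ite, Finset.sum_const, Finset.sum_const]
      simp [mul_comm]
    simp_rw [h1]
    rw [Finset.sum_comm]
    refine Finset.sum_congr rfl fun i _ => ?_
    rw [Finset.sum_ite_eq]
    simp
  -- stationarity: n*S both ways
  have stat1 : (n:ℝ) * S = ∑ b : (∀ j, A j), σ b * ∑ i, W (Function.update b i (br i b)) := by
    have : (n:ℝ) * S = ∑ a : (∀ j, A j),
        (∑ b : (∀ j, A j), ((Finset.univ.filter
          (fun i : Fin n => Function.update b i (br i b) = a)).card : ℝ) * σ b) * W a := by
      rw [hS, Finset.mul_sum]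
      refine Finset.sum_congr rfl fun a _ => ?_
      rw [hstat a]
      rw [← mul_assoc, ← mul_assoc, mul_one_div_cancel hnR.ne', one_mul]
    rw [this]
    simp_rw [Finset.sum_mul]
    rw [Finset.sum_comm]
    refine Finset.sum_congr rfl fun b _ => ?_
    rw [← key b, Finset.mul_sum]
    refine Finset.sum_congr rfl fun a _ => by ring
  -- zero expected welfare change
  have balance : ∑ b : (∀ j, A j), σ b * ∑ i, (W b - W (Function.update b i (br i b))) = 0 := by
    have e1 : ∀ b : (∀ j, A j), σ b * ∑ i, (W b - W (Function.update b i (br i b)))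
        = (n:ℝ) * (σ b * W b) - σ b * ∑ i, W (Function.update b i (br i b)) := by
      intro b
      rw [Finset.sum_sub_distrib, Finset.sum_const, Finset.card_univ, Fintype.card_fin]
      ring
    simp_rw [e1]
    rw [Finset.sum_sub_distrib, ← Finset.mul_sum, ← hS, ← stat1]
    ring
  -- pointwise: best response not much worse than astar deviation
  have hstep : ∀ (i : Fin n) (a : (∀ j, A j)),
      W (Function.update a i (astar i)) - W (Function.update a i (br i a)) ≤ 2 * beta * W astar := by
    intro i a
    have h1 := hbr i a (astar i)
    have h2 := abs_le.1 (hmis i (Function.update a i (astar i)))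
    have h3 := abs_le.1 (hmis i (Function.update a i (br i a)))
    linarith [h2.1, h2.2, h3.1, h3.2]
  have ptw : ∀ a : (∀ j, A j),
      ∑ i, (W a - W (Function.update a i (br i a)))
        ≤ muc * W a - lamc * W astar + 2 * beta * n * W astar := by
    intro a
    have : ∑ i, (W a - W (Function.update a i (br i a)))
        = ∑ i, (W a - W (Function.update a i (astar i)))
          + ∑ i, (W (Function.update a i (astar i)) - W (Function.update a i (br i a))) := by
      rw [← Finset.sum_add_distrib]; refine Finset.sum_congr rfl fun i _ => by ring
    rw [this]
    have hb : ∑ i, (W (Function.update a i (astar i)) - W (Function.update a i (br i a)))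
        ≤ (n:ℝ) * (2 * beta * W astar) := by
      calc ∑ i, (W (Function.update a i (astar i)) - W (Function.update a i (br i a)))
          ≤ ∑ _i : Fin n, 2 * beta * W astar := Finset.sum_le_sum fun i _ => hstep i a
        _ = (n:ℝ) * (2 * beta * W astar) := by
            rw [Finset.sum_const, Finset.card_univ, Fintype.card_fin]; ring
    have := hsmooth a
    linarith
  -- main inequality: 0 ≤ muc*S - lamc*W* + 2βn W*
  have main : lamc * W astar - 2 * beta * n * W astar ≤ muc * S := by
    have h1 : (0:ℝ) ≤ ∑ a : (∀ j, A j),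
        σ a * (muc * W a - lamc * W astar + 2 * beta * n * W astar)
          - ∑ b : (∀ j, A j), σ b * ∑ i, (W b - W (Function.update b i (br i b))) := by
      rw [← Finset.sum_sub_distrib]
      refine Finset.sum_nonneg fun a _ => ?_
      have := ptw a
      nlinarith [hσ_nonneg a]
    have h2 : ∑ a : (∀ j, A j), σ a * (muc * W a - lamc * W astar + 2 * beta * n * W astar)
        = muc * S - lamc * W astar + 2 * beta * n * W astar := by
      have e2 : ∀ a : (∀ j, A j), σ a * (muc * W a - lamc * W astar + 2 * beta * n * W astar)
          = muc * (σ a * W a) + (2 * beta * n * W astar - lamc * W astar) * σ a := by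
        intro a; ring
      simp_rw [e2]
      rw [Finset.sum_add_distrib, ← Finset.mul_sum, ← Finset.mul_sum, hσ_sum, ← hS]
      ring
    rw [balance, sub_zero, h2] at h1
    linarith
  -- conclude
  rcases le_or_gt ((lamc - 4 * beta * n) / muc) 0 with hle | hpos
  · rw [max_eq_right hle, zero_mul]; exact hSnn
  · rw [max_eq_left hpos.le]
    have hmuc : 0 < muc := by
      rcases lt_or_eq_of_le (hlam.trans hlm) with h | h
      · exact h
      · exfalso; rw [← h, div_zero] at hpos; exact lt_irrefl 0 hpos
    have hbn : 0 ≤ beta * (n:ℝ) * W astar := by positivity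
    rw [ge_iff_le, div_mul_eq_mul_div, div_le_iff₀ hmuc]
    nlinarith [main, hbn]
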